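/- arXiv:2003.07742 — 5 statements merged into one kernel-verified Lean document; each statement's English description precedes it below -/
import Mathlib

section
/- Let X be a separable Banach space, Y a closed subspace of X, and Q : X → X/Y the canonical quotient map. If the quotient X/Y is infinite-dimensional, then there exists a dense linear subspace X₀ of X such that the restriction of Q to X₀ is injective. -/
open Submodule Set TopologicalSpace

/-- Auxiliary recursively defined sequence: `mySeq g n = g n (previous values)`. -/
noncomputable def mySeq {X : Type*} (g : ∀ n : ℕ, (Fin n → X) → X) : ℕ → X
  | n => g n fun i => mySeq g i
decreasing_by exact i.isLt

lemma mySeq_eq {X : Type*} (g : ∀ n : ℕ, (Fin n → X) → X) (n : ℕ) :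
    mySeq g n = g n fun i => mySeq g i := by
  rw [mySeq]

/-- Key approximation lemma: near any point we can find a vector outside `F ⊔ Y`
whenever `F` is finite-dimensional and `X ⧸ Y` is infinite-dimensional. -/
lemma key_lemma {X : Type*} [NormedAddCommGroup X] [NormedSpace ℝ X]
    (Y : Submodule ℝ X) (hinf : ¬ FiniteDimensional ℝ (X ⧸ Y))
    (F : Submodule ℝ X) (hF : FiniteDimensional ℝ F) (x : X) {ε : ℝ} (hε : 0 < ε) :
    ∃ v : X, ‖v - x‖ < ε ∧ v ∉ F ⊔ Y := by
  have hne : F ⊔ Y ≠ ⊤ := by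
    intro h
    apply hinf
    have hmap : Submodule.map Y.mkQ F = ⊤ := by
      rw [eq_top_iff]
      rintro z -
      obtain ⟨w, rfl⟩ := Y.mkQ_surjective z
      have hw : w ∈ F ⊔ Y := h ▸ Submodule.mem_top
      obtain ⟨f, hf, y, hy, rfl⟩ := Submodule.mem_sup.1 hw
      refine ⟨f, hf, ?_⟩
      have : Y.mkQ y = 0 := (Submodule.Quotient.mk_eq_zero Y).2 hy
      simp [map_add, this]
    have hFG : F.FG := Module.Finite.iff_fg.1 hF
    have : (⊤ : Submodule ℝ (X ⧸ Y)).FG := hmap ▸ hFG.map Y.mkQ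
    exact Module.finite_def.2 this
  have hint : interior ((F ⊔ Y : Submodule ℝ X) : Set X) = ∅ := by
    by_contra h
    exact hne (Submodule.eq_top_of_nonempty_interior' _ (nonempty_iff_ne_empty.2 h))
  have hd : Dense (((F ⊔ Y : Submodule ℝ X) : Set X))ᶜ :=
    interior_eq_empty_iff_dense_compl.1 hint
  obtain ⟨v, hv1, hv2⟩ := Metric.dense_iff.1 hd x ε hε
  refine ⟨v, ?_, hv2⟩
  rw [Metric.mem_ball, dist_eq_norm] at hv1
  exact hv1

theorem stmt0 (X : Type*) [NormedAddCommGroup X] [NormedSpace ℝ X] [CompleteSpace X]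
    [TopologicalSpace.SeparableSpace X]
    (Y : Submodule ℝ X) (hY : IsClosed (Y : Set X))
    (hinf : ¬ FiniteDimensional ℝ (X ⧸ Y)) :
    ∃ X₀ : Submodule ℝ X, Dense (X₀ : Set X) ∧
      Set.InjOn (Submodule.Quotient.mk : X → X ⧸ Y) (X₀ : Set X) := by
  haveI : Nonempty X := ⟨0⟩
  -- a dense sequence in which every value of `denseSeq X` is hit infinitely often
  set u : ℕ → X := fun n => denseSeq X (Nat.unpair n).1 with hu
  have hpos : ∀ n : ℕ, (0 : ℝ) < 1 / (n + 1) := fun n => by positivity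
  -- the choice function
  set g : ∀ n : ℕ, (Fin n → X) → X := fun n w =>
    Classical.choose (key_lemma Y hinf (Submodule.span ℝ (Set.range w))
      (FiniteDimensional.span_of_finite ℝ (Set.finite_range w)) (u n) (hpos n)) with hg
  set v : ℕ → X := mySeq g with hvdef
  have hvspec : ∀ n : ℕ, ‖v n - u n‖ < 1 / (n + 1) ∧
      v n ∉ Submodule.span ℝ (Set.range fun i : Fin n => v i.val) ⊔ Y := by
    intro n
    have := Classical.choose_spec (key_lemma Y hinf
      (Submodule.span ℝ (Set.range fun i : Fin n => v i.val))
      (FiniteDimensional.span_of_finite ℝ (Set.finite_range _)) (u n) (hpos n))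
    rw [hvdef, mySeq_eq g n]
    exact this
  set F : ℕ → Submodule ℝ X := fun n =>
    Submodule.span ℝ (Set.range fun i : Fin n => v i.val) with hF
  have hFmono : Monotone F := by
    intro m n hmn
    apply Submodule.span_mono
    rintro x ⟨i, rfl⟩
    exact ⟨⟨i.val, lt_of_lt_of_le i.isLt hmn⟩, rfl⟩
  -- each F n intersects Y trivially
  have hFY : ∀ n, F n ⊓ Y = ⊥ := by
    intro n
    induction n with
    | zero =>
      have : (Set.range fun i : Fin 0 => v i.val) = ∅ := Set.range_eq_empty _
      rw [hF]
      simp only [this, Submodule.span_empty, bot_inf_eq]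
    | succ n ih =>
      have hins : (Set.range fun i : Fin (n + 1) => v i.val) =
          insert (v n) (Set.range fun i : Fin n => v i.val) := by
        ext x
        simp only [Set.mem_range, Set.mem_insert_iff]
        constructor
        · rintro ⟨i, rfl⟩
          rcases eq_or_lt_of_le (Nat.lt_succ_iff.1 i.isLt) with h | h
          · left; rw [h]
          · right; exact ⟨⟨i.val, h⟩, rfl⟩
        · rintro (rfl | ⟨i, rfl⟩)
          · exact ⟨⟨n, n.lt_succ_self⟩, rfl⟩
          · exact ⟨⟨i.val, i.isLt.trans n.lt_succ_self⟩, rfl⟩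
      rw [eq_bot_iff]
      rintro x hx
      rw [Submodule.mem_inf] at hx
      obtain ⟨hx1, hx2⟩ := hx
      rw [hF] at hx1
      simp only [hins] at hx1
      obtain ⟨c, z, hz, rfl⟩ := Submodule.mem_span_insert.1 hx1
      rcases eq_or_ne c 0 with hc | hc
      · subst hc
        rw [zero_smul, zero_add] at hx2 ⊢
        have : z ∈ F n ⊓ Y := Submodule.mem_inf.2 ⟨hz, hx2⟩
        rw [ih] at this
        exact this
      · exfalso
        apply (hvspec n).2
        have hxY : c • v n + z ∈ F n ⊔ Y := Submodule.mem_sup_right hx2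
        have hzS : z ∈ F n ⊔ Y := Submodule.mem_sup_left hz
        have hsub : c • v n ∈ F n ⊔ Y := by
          have := Submodule.sub_mem _ hxY hzS
          simpa using this
        have := Submodule.smul_mem _ c⁻¹ hsub
        rwa [smul_smul, inv_mul_cancel₀ hc, one_smul] at this
  refine ⟨Submodule.span ℝ (Set.range v), ?_, ?_⟩
  · -- density
    rw [Metric.dense_iff]
    intro x r hr
    obtain ⟨k, hk⟩ := Metric.denseRange_iff.1 (denseRange_denseSeq X) x (r / 2) (by linarith)
    obtain ⟨M, hM⟩ := exists_nat_one_div_lt (show (0 : ℝ) < r / 2 by linarith)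
    set n := Nat.pair k M with hn
    have hun : u n = denseSeq X k := by
      rw [hu]; simp [hn, Nat.unpair_pair]
    have hMn : (M : ℝ) ≤ n := by exact_mod_cast Nat.right_le_pair k M
    have h1n : (1 : ℝ) / (n + 1) ≤ 1 / (M + 1) := by
      apply one_div_le_one_div_of_le (by positivity)
      linarith
    refine ⟨v n, ?_, Submodule.subset_span ⟨n, rfl⟩⟩
    rw [Metric.mem_ball]
    have h1 : dist x (v n) ≤ dist x (u n) + dist (u n) (v n) := dist_triangle _ _ _
    have h2 : dist (u n) (v n) < r / 2 := by
      rw [dist_comm, dist_eq_norm]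
      calc ‖v n - u n‖ < 1 / (n + 1) := (hvspec n).1
        _ ≤ 1 / (M + 1) := h1n
        _ < r / 2 := hM
    have h3 : dist x (u n) < r / 2 := by rw [hun]; exact hk
    rw [dist_comm]
    linarith
  · -- injectivity on the span
    have hXY : Submodule.span ℝ (Set.range v) ⊓ Y = ⊥ := by
      have hrange : Set.range v = ⋃ n, (Set.range fun i : Fin n => v i.val) := by
        ext x
        simp only [Set.mem_range, Set.mem_iUnion]
        constructor
        · rintro ⟨m, rfl⟩
          exact ⟨m + 1, ⟨⟨m, m.lt_succ_self⟩, rfl⟩⟩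
        · rintro ⟨m, i, rfl⟩
          exact ⟨i.val, rfl⟩
      have hspan : Submodule.span ℝ (Set.range v) = ⨆ n, F n := by
        rw [hrange, Submodule.span_iUnion]
      rw [eq_bot_iff]
      rintro x hx
      rw [Submodule.mem_inf, hspan] at hx
      obtain ⟨hx1, hx2⟩ := hx
      obtain ⟨m, hm⟩ := (Submodule.mem_iSup_of_directed F hFmono.directed_le).1 hx1
      have : x ∈ F m ⊓ Y := Submodule.mem_inf.2 ⟨hm, hx2⟩
      rw [hFY m] at this
      exact this
    intro a ha b hb hab
    have h1 : a - b ∈ Y := (Submodule.Quotient.eq Y).1 hab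
    have h2 : a - b ∈ Submodule.span ℝ (Set.range v) := Submodule.sub_mem _ ha hb
    have : a - b ∈ Submodule.span ℝ (Set.range v) ⊓ Y := Submodule.mem_inf.2 ⟨h2, h1⟩
    rw [hXY, Submodule.mem_bot] at this
    exact sub_eq_zero.1 this
end

section
/- Let X be a separable normed space and let f : X → Z be a continuous linear surjection onto a normed space Z with infinite-dimensional range. Then there exists a dense subspace X₀ ⊆ X on which f is injective. (It suffices to assume Z = range f is infinite-dimensional.) -/
open Submodule Set

private noncomputable def seqRec {X : Type*} [Zero X] (F : (ℕ → X) → ℕ → X) : ℕ → X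
  | n => F (fun m => if h : m < n then seqRec F m else 0) n
  decreasing_by exact h

private lemma seqRec_eq {X : Type*} [Zero X] (F : (ℕ → X) → ℕ → X) (n : ℕ) :
    seqRec F n = F (fun m => if _ : m < n then seqRec F m else 0) n := by
  rw [seqRec]

private lemma aux_li {M : Type*} [AddCommGroup M] [Module ℝ M] (v : ℕ → M)
    (h : ∀ n, v n ∉ Submodule.span ℝ (v '' Set.Iio n)) : LinearIndependent ℝ v := by
  have hinj : Function.Injective v := by
    intro m n hmn
    by_contra hne
    rcases Nat.lt_or_ge m n with hlt | hge
    · exact h n (hmn ▸ Submodule.subset_span ⟨m, hlt, rfl⟩)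
    · exact h m (hmn ▸ Submodule.subset_span ⟨n, lt_of_le_of_ne hge (Ne.symm hne), rfl⟩)
  have hset : ∀ n, LinearIndependent ℝ (fun x : (v '' Set.Iio n) => (x : M)) := by
    intro n
    induction n with
    | zero =>
      have : Set.Iio (0 : ℕ) = ∅ := by ext m; simp
      rw [this, Set.image_empty]
      exact linearIndependent_empty ℝ M
    | succ n ih =>
      have : Set.Iio (n + 1) = insert n (Set.Iio n) := by
        ext m; simp only [Set.mem_Iio, Set.mem_insert_iff]; omega
      rw [this, Set.image_insert_eq]
      exact LinearIndepOn.insert (v := id) ih (by rw [Set.image_id]; exact h n)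
  have hrange : LinearIndependent ℝ (fun x : Set.range v => (x : M)) := by
    have hr : Set.range v = ⋃ n, v '' Set.Iio n := by
      ext x
      constructor
      · rintro ⟨m, rfl⟩
        exact Set.mem_iUnion.2 ⟨m + 1, ⟨m, Nat.lt_succ_self m, rfl⟩⟩
      · rintro hx
        obtain ⟨n, m, _, rfl⟩ := Set.mem_iUnion.1 hx
        exact ⟨m, rfl⟩
    rw [hr]
    refine linearIndepOn_iUnion_of_directed (v := id) ?_ hset
    intro m n
    exact ⟨max m n, Set.image_mono (Set.Iio_subset_Iio (le_max_left m n)),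
      Set.image_mono (Set.Iio_subset_Iio (le_max_right m n))⟩
  exact (linearIndepOn_id_range_iff hinj).mp hrange

theorem stmt1 (X Z : Type*) [NormedAddCommGroup X] [NormedSpace ℝ X]
    [TopologicalSpace.SeparableSpace X]
    [NormedAddCommGroup Z] [NormedSpace ℝ Z]
    (f : X →L[ℝ] Z) (hf : Function.Surjective f)
    (hinf : ¬ FiniteDimensional ℝ Z) :
    ∃ X₀ : Submodule ℝ X, Dense (X₀ : Set X) ∧ Set.InjOn f (X₀ : Set X) := by
  have : Nonempty X := ⟨0⟩
  set e : ℕ → X := TopologicalSpace.denseSeq X with he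
  have hde : DenseRange e := TopologicalSpace.denseRange_denseSeq X
  set d : ℕ → X := fun n => e (Nat.unpair n).1 with hd
  -- step: we can always perturb d n slightly so its image escapes a finite-dim span
  have step : ∀ (g : ℕ → X) (n : ℕ), ∃ z : X,
      ‖z - d n‖ < 1 / (n + 1) ∧ f z ∉ Submodule.span ℝ (f '' (g '' Set.Iio n)) := by
    intro g n
    set S : Submodule ℝ Z := Submodule.span ℝ (f '' (g '' Set.Iio n)) with hS
    have hSfin : FiniteDimensional ℝ S :=
      FiniteDimensional.span_of_finite ℝ ((Set.finite_Iio n).image g |>.image f)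
    have hSne : S ≠ ⊤ := by
      intro hTop
      apply hinf
      have : FiniteDimensional ℝ (⊤ : Submodule ℝ Z) := hTop ▸ hSfin
      exact Module.Finite.equiv (Submodule.topEquiv (R := ℝ) (M := Z))
    obtain ⟨z, -, hz⟩ := SetLike.exists_of_lt (hSne.lt_top)
    obtain ⟨w, hw⟩ := hf z
    have hn : (0 : ℝ) < 1 / (n + 1) := by positivity
    by_cases hx : f (d n) ∈ S
    · set ε : ℝ := (1 / (n + 1)) / (2 * (‖w‖ + 1)) with hε
      have hεpos : 0 < ε := by positivity
      refine ⟨d n + ε • w, ?_, ?_⟩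
      · have hwn : 0 ≤ ‖w‖ := norm_nonneg w
        have : ‖d n + ε • w - d n‖ = ε * ‖w‖ := by
          simp [norm_smul, abs_of_pos hεpos]
        rw [this, hε]
        rw [div_mul_eq_mul_div, div_lt_iff₀ (by positivity)]
        nlinarith
      · intro hmem
        apply hz
        have h1 : f (d n + ε • w) - f (d n) ∈ S := Submodule.sub_mem S hmem hx
        have h2 : f (d n + ε • w) - f (d n) = ε • z := by
          rw [map_add, map_smul, hw]; abel
        have h3 : ε • z ∈ S := h2 ▸ h1
        have := Submodule.smul_mem S ε⁻¹ h3
        rwa [smul_smul, inv_mul_cancel₀ (ne_of_gt hεpos), one_smul] at this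
    · exact ⟨d n, by simpa using hn, hx⟩
  choose F hF1 hF2 using step
  set y : ℕ → X := seqRec F with hy
  have hkey : ∀ n, ‖y n - d n‖ < 1 / (n + 1) ∧
      f (y n) ∉ Submodule.span ℝ ((⇑f ∘ y) '' Set.Iio n) := by
    intro n
    have himg : (fun m => if _ : m < n then seqRec F m else 0) '' Set.Iio n = y '' Set.Iio n := by
      apply Set.image_congr
      intro a ha
      simp only [Set.mem_Iio] at ha
      simp [ha, hy]
    have h1 := hF1 (fun m => if _ : m < n then seqRec F m else 0) n
    have h2 := hF2 (fun m => if _ : m < n then seqRec F m else 0) n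
    rw [himg] at h2
    rw [← seqRec_eq F n] at h1 h2
    refine ⟨h1, ?_⟩
    rwa [Set.image_comp]
  have hli : LinearIndependent ℝ (⇑f ∘ y) := aux_li _ (fun n => (hkey n).2)
  refine ⟨Submodule.span ℝ (Set.range y), ?_, ?_⟩
  · -- density
    rw [Metric.dense_iff]
    intro x r hr
    obtain ⟨p, hpb, k, rfl⟩ := Metric.dense_iff.mp hde x (r / 2) (by linarith)
    simp only [Metric.mem_ball] at hpb
    obtain ⟨j, hj⟩ := exists_nat_one_div_lt (K := ℝ) (show (0:ℝ) < r / 2 by linarith)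
    set n := Nat.pair k j with hn
    refine ⟨y n, ?_, Submodule.subset_span ⟨n, rfl⟩⟩
    have hdn : d n = e k := by simp [hd, hn]
    have h1 : ‖y n - d n‖ < 1 / (n + 1) := (hkey n).1
    have h2 : (1 : ℝ) / (n + 1) ≤ 1 / (j + 1) := by
      apply div_le_div_of_nonneg_left (by norm_num) (by positivity)
      have := Nat.right_le_pair k j
      push_cast
      exact_mod_cast by linarith [this]
    have : dist (y n) x ≤ dist (y n) (e k) + dist (e k) x := dist_triangle _ _ _
    rw [Metric.mem_ball]
    have hyd : dist (y n) (e k) < r / 2 := by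
      rw [dist_eq_norm, ← hdn]
      calc ‖y n - d n‖ < 1 / (n + 1) := h1
        _ ≤ 1 / (j + 1) := h2
        _ < r / 2 := hj
    linarith
  · -- injectivity
    have hker : ∀ x ∈ Submodule.span ℝ (Set.range y), f x = 0 → x = 0 := by
      intro x hx hfx
      obtain ⟨c, hc⟩ := Finsupp.mem_span_range_iff_exists_finsupp.mp hx
      have hc0 : Finsupp.linearCombination ℝ (⇑f ∘ y) c = 0 := by
        rw [Finsupp.linearCombination_apply]
        have : f x = c.sum fun i a => a • f (y i) := by
          rw [← hc, map_finsuppSum]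
          simp
        rw [← hfx, this]
        rfl
      have := linearIndependent_iff.mp hli c hc0
      rw [← hc, this]
      simp
    intro a ha b hb hab
    have hsub : a - b ∈ Submodule.span ℝ (Set.range y) := Submodule.sub_mem _ ha hb
    have : f (a - b) = 0 := by rw [map_sub, hab, sub_self]
    have := hker _ hsub this
    exact sub_eq_zero.mp this
end

section
/- Let X be a normed space with a biorthogonal system (xₙ, xₙ*): xₙ ∈ X, xₙ* ∈ X*, xₖ*(xₙ) = δ_{k,n}, which is semi-normalized (0 < inf ‖xₙ‖ and sup ‖xₙ‖ < ∞) and 1-Besselian, meaning the coefficient transform F(x) = (xₙ*(x))ₙ defines a bounded linear operator from X into ℓ¹. Then there is a bounded linear operator S : ℓ¹ → X̄ (the completion of X) with S(eₙ) = xₙ for all n, and the extension F̂ of F to X̄ satisfies F̂ ∘ S = Id on ℓ¹; hence S is a linear isomorphism onto its (closed, complemented) range. -/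
open UniformSpace
open scoped ENNReal

theorem stmt13 (X : Type*) [NormedAddCommGroup X] [NormedSpace ℝ X]
    (x : ℕ → X) (xs : ℕ → (X →L[ℝ] ℝ))
    (hbi : ∀ k n, xs k (x n) = if k = n then (1 : ℝ) else 0)
    (hsn₁ : 0 < ⨅ n, ‖x n‖) (hsn₂ : BddAbove (Set.range fun n => ‖x n‖))
    (C : ℝ)
    (hsum : ∀ v : X, Summable (fun n => |xs n v|))
    (hbes : ∀ v : X, (∑' n, |xs n v|) ≤ C * ‖v‖) :
    ∃ (S : lp (fun _ : ℕ => ℝ) 1 →L[ℝ] Completion X)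
      (Fh : Completion X →L[ℝ] lp (fun _ : ℕ => ℝ) 1),
      (∀ n, S (lp.single 1 n 1) = (x n : Completion X)) ∧
      (∀ (v : X) (n : ℕ), (Fh (v : Completion X) : ∀ _ : ℕ, ℝ) n = xs n v) ∧
      Fh.comp S = ContinuousLinearMap.id ℝ (lp (fun _ : ℕ => ℝ) 1) ∧
      IsClosed (Set.range S) := by
  classical
  obtain ⟨M, hM⟩ := hsn₂
  have hM' : ∀ n, ‖x n‖ ≤ M := fun n => hM ⟨n, rfl⟩
  have hM0 : 0 ≤ M := le_trans (norm_nonneg (x 0)) (hM' 0)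
  have htr : (0 : ℝ) < (1 : ℝ≥0∞).toReal := by norm_num
  -- the coefficient map F : X →L ℓ¹
  have hmem : ∀ v : X, Memℓp (fun n => xs n v) 1 := fun v => by
    apply memℓp_gen
    simpa [Real.norm_eq_abs] using hsum v
  have hFnorm : ∀ (f : lp (fun _ : ℕ => ℝ) 1), ‖f‖ = ∑' n, |(f : ∀ _ : ℕ, ℝ) n| := by
    intro f
    rw [lp.norm_eq_tsum_rpow htr]
    simp [Real.norm_eq_abs]
  set F : X →L[ℝ] lp (fun _ : ℕ => ℝ) 1 :=
    LinearMap.mkContinuous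
      { toFun := fun v => ⟨fun n => xs n v, hmem v⟩
        map_add' := fun v w => by ext n; simp; rfl
        map_smul' := fun c v => by ext n; simp }
      C (fun v => by
        rw [hFnorm]
        exact hbes v) with hF
  have hFapp : ∀ (v : X) (n : ℕ), (F v : ∀ _ : ℕ, ℝ) n = xs n v := fun v n => rfl
  -- Fh : extension of F to the completion
  set Fh : Completion X →L[ℝ] lp (fun _ : ℕ => ℝ) 1 :=
    F.extend (Completion.toComplL) with hFh
  have hFhcoe : ∀ v : X, Fh (v : Completion X) = F v := fun v => by
    simpa [hFh, Completion.toComplL] using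
      ContinuousLinearMap.extend_eq F (e := Completion.toComplL) Completion.denseRange_coe
        (Completion.isUniformInducing_coe X) v
  -- summability for S
  have hSnorm : ∀ a : lp (fun _ : ℕ => ℝ) 1,
      Summable (fun n => ‖(a : ∀ _ : ℕ, ℝ) n • ((x n : Completion X))‖) := by
    intro a
    have ha : Summable (fun n => ‖(a : ∀ _ : ℕ, ℝ) n‖) := by
      simpa using (lp.memℓp a).summable htr
    apply Summable.of_nonneg_of_le (fun n => norm_nonneg _) _ (ha.mul_right M)
    intro n
    rw [norm_smul, Completion.norm_coe]
    exact mul_le_mul_of_nonneg_left (hM' n) (norm_nonneg _)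
  have hSsum : ∀ a : lp (fun _ : ℕ => ℝ) 1,
      Summable (fun n => (a : ∀ _ : ℕ, ℝ) n • ((x n : Completion X))) :=
    fun a => (hSnorm a).of_norm
  have hSbound : ∀ a : lp (fun _ : ℕ => ℝ) 1,
      ‖∑' n, (a : ∀ _ : ℕ, ℝ) n • ((x n : Completion X))‖ ≤ M * ‖a‖ := by
    intro a
    have ha : Summable (fun n => ‖(a : ∀ _ : ℕ, ℝ) n‖) := by
      simpa using (lp.memℓp a).summable htr
    calc ‖∑' n, (a : ∀ _ : ℕ, ℝ) n • ((x n : Completion X))‖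
        ≤ ∑' n, ‖(a : ∀ _ : ℕ, ℝ) n • ((x n : Completion X))‖ :=
          norm_tsum_le_tsum_norm (hSnorm a)
      _ ≤ ∑' n, ‖(a : ∀ _ : ℕ, ℝ) n‖ * M := by
          apply Summable.tsum_le_tsum _ (hSnorm a) (ha.mul_right M)
          intro n
          rw [norm_smul, Completion.norm_coe]
          exact mul_le_mul_of_nonneg_left (hM' n) (norm_nonneg _)
      _ = M * ∑' n, ‖(a : ∀ _ : ℕ, ℝ) n‖ := by rw [tsum_mul_right, mul_comm]
      _ = M * ‖a‖ := by rw [hFnorm]; simp [Real.norm_eq_abs]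
  set S : lp (fun _ : ℕ => ℝ) 1 →L[ℝ] Completion X :=
    LinearMap.mkContinuous
      { toFun := fun a => ∑' n, (a : ∀ _ : ℕ, ℝ) n • ((x n : Completion X))
        map_add' := fun a b => by
          rw [← Summable.tsum_add (hSsum a) (hSsum b)]
          refine tsum_congr fun n => ?_
          rw [lp.coeFn_add, Pi.add_apply, add_smul]
        map_smul' := fun c a => by
          rw [RingHom.id_apply, ← Summable.tsum_const_smul c (hSsum a)]
          refine tsum_congr fun n => ?_
          rw [lp.coeFn_smul, Pi.smul_apply, smul_smul]
          rfl }
      M hSbound with hS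
  have hSapp : ∀ a : lp (fun _ : ℕ => ℝ) 1,
      S a = ∑' n, (a : ∀ _ : ℕ, ℝ) n • ((x n : Completion X)) := fun a => rfl
  -- S on basis vectors
  have hSsingle : ∀ n, S (lp.single 1 n 1) = (x n : Completion X) := by
    intro n
    rw [hSapp]
    rw [tsum_eq_single n]
    · rw [lp.single_apply_self]; simp
    · intro k hk
      rw [lp.single_apply_ne 1 n _ hk]; simp
  -- F on basis vectors
  have hFx : ∀ n, F (x n) = lp.single 1 n 1 := by
    intro n
    apply lp.ext
    funext k
    rw [hFapp, hbi k n, lp.single_apply]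
    split_ifs <;> simp_all
  -- Fh ∘ S = id
  have hcomp : ∀ a : lp (fun _ : ℕ => ℝ) 1, Fh (S a) = a := by
    intro a
    rw [hSapp, ContinuousLinearMap.map_tsum Fh (hSsum a)]
    have key : ∀ n, Fh ((a : ∀ _ : ℕ, ℝ) n • ((x n : Completion X)))
        = lp.single 1 n ((a : ∀ _ : ℕ, ℝ) n) := by
      intro n
      rw [map_smul, hFhcoe, hFx, ← lp.single_smul]
      simp
    simp_rw [key]
    have : Fact ((1:ℝ≥0∞) ≤ 1) := ⟨le_refl _⟩
    exact (lp.hasSum_single (by norm_num) a).tsum_eq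
  refine ⟨S, Fh, hSsingle, fun v n => by rw [hFhcoe]; exact hFapp v n, ?_, ?_⟩
  · ext a
    simp [hcomp a]
  · have : Set.range S = {y | S (Fh y) = y} := by
      apply Set.Subset.antisymm
      · rintro _ ⟨a, rfl⟩
        simp [Set.mem_setOf_eq, hcomp a]
      · intro y hy
        exact ⟨Fh y, hy⟩
    rw [this]
    exact isClosed_eq (S.continuous.comp Fh.continuous) continuous_id
end

section
/- Let X be a Banach space and Y a closed subspace spanned by a sequence (xₙ) forming part of a semi-normalized biorthogonal system (xₙ, xₙ*) whose coefficient transform F : X → ℓ¹, F(x) = (xₙ*(x))ₙ, is bounded. Then X is isomorphic to ℓ¹ ⊕ (X/Y) via the map x ↦ (F(x), x + Y). -/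
set_option maxHeartbeats 1000000

theorem stmt14 (X : Type*) [NormedAddCommGroup X] [NormedSpace ℝ X] [CompleteSpace X]
    (x : ℕ → X) (xs : ℕ → (X →L[ℝ] ℝ))
    (hbi : ∀ k n, xs k (x n) = if k = n then (1 : ℝ) else 0)
    (hsn₁ : 0 < ⨅ n, ‖x n‖) (hsn₂ : BddAbove (Set.range fun n => ‖x n‖))
    (F : X →L[ℝ] lp (fun _ : ℕ => ℝ) 1)
    (hF : ∀ (v : X) (n : ℕ), (F v : ∀ _ : ℕ, ℝ) n = xs n v)
    (Y : Submodule ℝ X)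
    (hY : Y = (Submodule.span ℝ (Set.range x)).topologicalClosure) :
    ∃ e : X ≃L[ℝ] (lp (fun _ : ℕ => ℝ) 1 × (X ⧸ Y)),
      ∀ v : X, e v = (F v, Submodule.Quotient.mk v) := by
  classical
  obtain ⟨M, hM⟩ := hsn₂
  have hM' : ∀ n, ‖x n‖ ≤ M := fun n => hM ⟨n, rfl⟩
  have hns : ∀ a : lp (fun _ : ℕ => ℝ) 1,
      HasSum (fun i => ‖(a : ∀ _ : ℕ, ℝ) i‖) ‖a‖ := by
    intro a
    have := lp.hasSum_norm (p := 1) (by norm_num) a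
    simpa using this
  have hnsum : ∀ a : lp (fun _ : ℕ => ℝ) 1,
      Summable (fun n => ‖(a : ∀ _ : ℕ, ℝ) n • x n‖) := by
    intro a
    refine Summable.of_nonneg_of_le (fun n => norm_nonneg _) (fun n => ?_)
      ((hns a).summable.mul_right M)
    rw [norm_smul]
    exact mul_le_mul_of_nonneg_left (hM' n) (norm_nonneg _)
  have hsum : ∀ a : lp (fun _ : ℕ => ℝ) 1,
      Summable (fun n => (a : ∀ _ : ℕ, ℝ) n • x n) := fun a => (hnsum a).of_norm
  set Sfun : lp (fun _ : ℕ => ℝ) 1 → X := fun a => ∑' n, (a : ∀ _ : ℕ, ℝ) n • x n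
    with hSfun
  have hSadd : ∀ a b, Sfun (a + b) = Sfun a + Sfun b := by
    intro a b
    have : ∀ n, ((a + b : lp (fun _ : ℕ => ℝ) 1) : ∀ _ : ℕ, ℝ) n • x n
        = (a : ∀ _ : ℕ, ℝ) n • x n + (b : ∀ _ : ℕ, ℝ) n • x n := by
      intro n; rw [lp.coeFn_add]; simp [add_smul]
    simp only [hSfun, this]
    exact Summable.tsum_add (hsum a) (hsum b)
  have hSsmul : ∀ (c : ℝ) a, Sfun (c • a) = c • Sfun a := by
    intro c a
    have : ∀ n, ((c • a : lp (fun _ : ℕ => ℝ) 1) : ∀ _ : ℕ, ℝ) n • x n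
        = c • ((a : ∀ _ : ℕ, ℝ) n • x n) := by
      intro n; rw [lp.coeFn_smul]; simp [smul_smul]
    simp only [hSfun, this]
    exact ((hsum a).hasSum.const_smul c).tsum_eq
  set Slin : lp (fun _ : ℕ => ℝ) 1 →ₗ[ℝ] X :=
    { toFun := Sfun, map_add' := hSadd, map_smul' := hSsmul } with hSlin
  have hSbound : ∀ a, ‖Sfun a‖ ≤ M * ‖a‖ := by
    intro a
    have h1 : ‖Sfun a‖ ≤ ∑' n, ‖(a : ∀ _ : ℕ, ℝ) n • x n‖ :=
      norm_tsum_le_tsum_norm (hnsum a)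
    have h2 : ∑' n, ‖(a : ∀ _ : ℕ, ℝ) n • x n‖ ≤ ∑' n, ‖(a : ∀ _ : ℕ, ℝ) n‖ * M := by
      refine Summable.tsum_le_tsum (fun n => ?_) (hnsum a) ((hns a).summable.mul_right M)
      rw [norm_smul]
      exact mul_le_mul_of_nonneg_left (hM' n) (norm_nonneg _)
    have h3 : ∑' n, ‖(a : ∀ _ : ℕ, ℝ) n‖ * M = ‖a‖ * M := by
      rw [((hns a).mul_right M).tsum_eq]
    rw [h3, mul_comm] at h2
    exact h1.trans h2
  set S : lp (fun _ : ℕ => ℝ) 1 →L[ℝ] X := Slin.mkContinuous M hSbound with hS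
  -- coordinates of F ∘ S
  have hFS : ∀ a, F (S a) = a := by
    intro a
    apply lp.ext
    funext k
    rw [hF]
    have : xs k (S a) = ∑' n, xs k ((a : ∀ _ : ℕ, ℝ) n • x n) :=
      ContinuousLinearMap.map_tsum _ (hsum a)
    rw [this]
    have h1 : ∀ n, xs k ((a : ∀ _ : ℕ, ℝ) n • x n)
        = if n = k then (a : ∀ _ : ℕ, ℝ) k else 0 := by
      intro n
      rw [ContinuousLinearMap.map_smul, hbi]
      by_cases h : n = k
      · subst h; simp
      · simp [h, Ne.symm h]
    simp only [h1]
    exact tsum_ite_eq k _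
  have hxY : ∀ n, x n ∈ Y := by
    intro n
    rw [hY]
    exact Submodule.le_topologicalClosure _
      (Submodule.subset_span (Set.mem_range_self n))
  have hcl : IsClosed (Y : Set X) := by
    rw [hY]; exact Submodule.isClosed_topologicalClosure _
  haveI : IsClosed (Y : Set X) := hcl
  have hSY : ∀ a, S a ∈ Y := by
    intro a
    have hHS : HasSum (fun n => (a : ∀ _ : ℕ, ℝ) n • x n) (S a) := (hsum a).hasSum
    refine hcl.mem_of_tendsto hHS (Filter.Eventually.of_forall fun s => ?_)
    exact Submodule.sum_mem Y fun n _ => Submodule.smul_mem Y _ (hxY n)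
  have hSF : ∀ v ∈ Y, S (F v) = v := by
    have hker : Y ≤ LinearMap.ker ((S.comp F - ContinuousLinearMap.id ℝ X : X →L[ℝ] X) : X →ₗ[ℝ] X) := by
      rw [hY]
      refine Submodule.topologicalClosure_minimal _ ?_ ?_
      · rw [Submodule.span_le]
        rintro _ ⟨n, rfl⟩
        have hc : ∀ k, ((F (x n) : ∀ _ : ℕ, ℝ)) k = if k = n then (1 : ℝ) else 0 := by
          intro k; rw [hF, hbi]
        have : S (F (x n)) = x n := by
          have h1 : ∀ k, ((F (x n) : ∀ _ : ℕ, ℝ)) k • x k = if k = n then x n else 0 := by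
            intro k
            rw [hc]
            by_cases h : k = n
            · subst h; simp
            · simp [h]
          show Sfun (F (x n)) = x n
          simp only [hSfun, h1]
          exact tsum_ite_eq n _
        simp [LinearMap.mem_ker, this]
      · exact ContinuousLinearMap.isClosed_ker (S.comp F - ContinuousLinearMap.id ℝ X)
    intro v hv
    have h := hker hv
    rw [LinearMap.mem_ker] at h
    have h2 : S (F v) - v = 0 := by simpa using h
    exact sub_eq_zero.mp h2
  -- quotient map as CLM
  set Q : X →L[ℝ] X ⧸ Y :=
    Y.mkQ.mkContinuous 1 (fun v => by
      simpa using Submodule.Quotient.norm_mk_le Y v) with hQ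
  have hQapp : ∀ v : X, Q v = Submodule.Quotient.mk v := fun v => rfl
  set T : X →L[ℝ] (lp (fun _ : ℕ => ℝ) 1 × (X ⧸ Y)) := F.prod Q with hT
  have hinj : LinearMap.ker (T : X →ₗ[ℝ] (lp (fun _ : ℕ => ℝ) 1 × (X ⧸ Y))) = ⊥ := by
    rw [LinearMap.ker_eq_bot']
    intro v hv
    have h1 : F v = 0 := congrArg Prod.fst hv
    have h2 : Q v = 0 := congrArg Prod.snd hv
    have hvY : v ∈ Y := by
      rwa [hQapp, Submodule.Quotient.mk_eq_zero] at h2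
    have := hSF v hvY
    rw [h1, map_zero] at this
    exact this.symm
  have hsurj : LinearMap.range (T : X →ₗ[ℝ] (lp (fun _ : ℕ => ℝ) 1 × (X ⧸ Y))) = ⊤ := by
    rw [LinearMap.range_eq_top]
    rintro ⟨a, q⟩
    obtain ⟨x₀, rfl⟩ := Submodule.Quotient.mk_surjective Y q
    refine ⟨S a + (x₀ - S (F x₀)), ?_⟩
    have hF' : F (S a + (x₀ - S (F x₀))) = a := by
      rw [map_add, map_sub, hFS, hFS]; abel
    have hQ' : Q (S a + (x₀ - S (F x₀))) = Submodule.Quotient.mk x₀ := by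
      rw [hQapp]
      rw [show S a + (x₀ - S (F x₀)) = x₀ + (S a - S (F x₀)) by abel]
      rw [Submodule.Quotient.mk_add]
      have hz : (Submodule.Quotient.mk (S a - S (F x₀)) : X ⧸ Y) = 0 :=
        (Submodule.Quotient.mk_eq_zero Y).mpr (Y.sub_mem (hSY a) (hSY (F x₀)))
      rw [hz, add_zero]
    exact Prod.ext hF' hQ'
  refine ⟨ContinuousLinearEquiv.ofBijective T hinj hsurj, fun v => ?_⟩
  rw [ContinuousLinearEquiv.coeFn_ofBijective]
  rfl
end

section
/- Let X be a topological vector space over ℝ and let (V_i)_{i∈I} be a family of linear subspaces of X each having trivial continuous dual (every continuous linear functional on V_i is zero). Then the closed linear span of ⋃ V_i also has trivial continuous dual. Consequently X possesses a maximum closed subspace with trivial dual (its core). -/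
lemma key17 {X : Type*} [AddCommGroup X] [Module ℝ X] [TopologicalSpace X]
    [IsTopologicalAddGroup X] [ContinuousSMul ℝ X]
    {I : Type*} (V : I → Submodule ℝ X)
    (htriv : ∀ i, ∀ f : (V i) →L[ℝ] ℝ, f = 0) :
    ∀ g : ((⨆ i, V i).topologicalClosure) →L[ℝ] ℝ, g = 0 := by
  intro g
  have hST : (⨆ i, V i) ≤ (⨆ i, V i).topologicalClosure :=
    Submodule.le_topologicalClosure _
  let S : Submodule ℝ X := ⨆ i, V i
  let T : Submodule ℝ X := (⨆ i, V i).topologicalClosure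
  -- g vanishes on elements of S
  have hvan : ∀ (x : X) (hx : x ∈ S), g ⟨x, hST hx⟩ = 0 := by
    intro x hx
    refine Submodule.iSup_induction' (motive := fun y hy => g ⟨y, hST hy⟩ = 0) V ?_ ?_ ?_ hx
    · intro i y hy
      have hle : V i ≤ T := le_trans (le_iSup V i) hST
      let j : (V i) →L[ℝ] T :=
        ⟨Submodule.inclusion hle, Continuous.subtype_mk continuous_subtype_val _⟩
      have : g.comp j = 0 := htriv i _
      have := DFunLike.congr_fun this ⟨y, hy⟩
      exact this
    · exact map_zero g
    · intro y z hy hz h1 h2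
      have : (⟨y + z, hST (add_mem hy hz)⟩ : T) = ⟨y, hST hy⟩ + ⟨z, hST hz⟩ := rfl
      rw [this, map_add, h1, h2, add_zero]
  -- the kernel is closed and contains a dense set
  refine ContinuousLinearMap.ext fun x => ?_
  rw [ContinuousLinearMap.zero_apply]
  have hx : (x : X) ∈ closure (S : Set X) := x.2
  have hdense : x ∈ closure {y : T | (y : X) ∈ S} := by
    rw [closure_subtype]
    have himg : (Subtype.val '' {y : T | (y : X) ∈ S}) = (S : Set X) := by
      ext z
      constructor
      · rintro ⟨w, hw, rfl⟩; exact hw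
      · intro hz; exact ⟨⟨z, hST hz⟩, hz, rfl⟩
    rw [himg]; exact hx
  have hclosed : IsClosed {y : T | g y = 0} :=
    isClosed_eq g.continuous continuous_const
  have hsub : {y : T | (y : X) ∈ S} ⊆ {y : T | g y = 0} := by
    rintro ⟨y, hy⟩ hyS
    exact hvan y hyS
  exact hclosed.closure_subset_iff.mpr hsub hdense

theorem stmt17 (X : Type*) [AddCommGroup X] [Module ℝ X] [TopologicalSpace X]
    [IsTopologicalAddGroup X] [ContinuousSMul ℝ X]
    {I : Type*} (V : I → Submodule ℝ X)
    (htriv : ∀ i, ∀ f : (V i) →L[ℝ] ℝ, f = 0) :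
    (∀ g : ((⨆ i, V i).topologicalClosure) →L[ℝ] ℝ, g = 0) ∧
    ∃ C : Submodule ℝ X, IsClosed (C : Set X) ∧ (∀ g : C →L[ℝ] ℝ, g = 0) ∧
      ∀ W : Submodule ℝ X, (∀ g : W →L[ℝ] ℝ, g = 0) → W ≤ C := by
  refine ⟨key17 V htriv, ?_⟩
  let 𝒲 := {W : Submodule ℝ X // ∀ g : W →L[ℝ] ℝ, g = 0}
  refine ⟨(⨆ W : 𝒲, W.1).topologicalClosure,
    Submodule.isClosed_topologicalClosure _,
    key17 (fun W : 𝒲 => W.1) (fun W => W.2), ?_⟩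
  intro W hW
  exact le_trans (le_iSup (fun W : 𝒲 => W.1) ⟨W, hW⟩)
    (Submodule.le_topologicalClosure _)
end
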